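/- arXiv:1411.7324 — 4 statements merged into one kernel-verified Lean document; each statement's English description precedes it below -/
import Mathlib

section
/- Let μ and π be probability distributions on a finite alphabet with full support and μ ≠ π, and let k ≥ 1 be a natural number. Then η_k(μ‖π) := inf over full-support probability distributions p of [k·D(μ‖p) + D(π‖p)] is strictly positive. -/
open Finset
open scoped Classical

/-- `p` is a probability mass function on the finite alphabet `Y`. -/
def IsPMF {Y : Type*} [Fintype Y] (p : Y → ℝ) : Prop :=
  (∀ y, 0 ≤ p y) ∧ ∑ y, p y = 1

/-- Relative entropy (KL divergence), with the convention `0 log 0 = 0`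
(automatic since `0 * log _ = 0` in `ℝ`). -/
noncomputable def KL {Y : Type*} [Fintype Y] (p q : Y → ℝ) : ℝ :=
  ∑ y, p y * Real.log (p y / q y)

lemma KL_eq_neg {Y : Type*} [Fintype Y] (p q : Y → ℝ)
    (hppos : ∀ y, 0 < p y) (hqpos : ∀ y, 0 < q y) :
    KL p q = -∑ y, p y * Real.log (q y / p y) := by
  unfold KL
  rw [← Finset.sum_neg_distrib]
  refine Finset.sum_congr rfl fun y _ => ?_
  rw [Real.log_div (hppos y).ne' (hqpos y).ne',
    Real.log_div (hqpos y).ne' (hppos y).ne']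
  ring

lemma sum_sub_zero {Y : Type*} [Fintype Y] (p q : Y → ℝ)
    (hp : IsPMF p) (hq : IsPMF q) : ∑ y, (q y - p y) = 0 := by
  rw [Finset.sum_sub_distrib, hp.2, hq.2]; ring

lemma KL_nonneg {Y : Type*} [Fintype Y] (p q : Y → ℝ)
    (hp : IsPMF p) (hq : IsPMF q) (hppos : ∀ y, 0 < p y) (hqpos : ∀ y, 0 < q y) :
    0 ≤ KL p q := by
  rw [KL_eq_neg p q hppos hqpos, neg_nonneg]
  calc ∑ y, p y * Real.log (q y / p y) ≤ ∑ y, (q y - p y) := by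
        refine Finset.sum_le_sum fun y _ => ?_
        have hx : 0 < q y / p y := div_pos (hqpos y) (hppos y)
        have h := Real.log_le_sub_one_of_pos hx
        calc p y * Real.log (q y / p y) ≤ p y * (q y / p y - 1) :=
              mul_le_mul_of_nonneg_left h (hppos y).le
          _ = q y - p y := by have := (hppos y).ne'; field_simp
    _ = 0 := sum_sub_zero p q hp hq

lemma KL_pos {Y : Type*} [Fintype Y] (p q : Y → ℝ)
    (hp : IsPMF p) (hq : IsPMF q) (hppos : ∀ y, 0 < p y) (hqpos : ∀ y, 0 < q y)
    (hne : p ≠ q) : 0 < KL p q := by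
  rw [KL_eq_neg p q hppos hqpos, neg_pos]
  obtain ⟨y0, hy0⟩ : ∃ y, p y ≠ q y := by
    by_contra h
    push_neg at h
    exact hne (funext h)
  calc ∑ y, p y * Real.log (q y / p y) < ∑ y, (q y - p y) := by
        refine Finset.sum_lt_sum (fun y _ => ?_) ⟨y0, Finset.mem_univ y0, ?_⟩
        · have hx : 0 < q y / p y := div_pos (hqpos y) (hppos y)
          have h := Real.log_le_sub_one_of_pos hx
          calc p y * Real.log (q y / p y) ≤ p y * (q y / p y - 1) :=
                mul_le_mul_of_nonneg_left h (hppos y).le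
            _ = q y - p y := by have := (hppos y).ne'; field_simp
        · have hx : 0 < q y0 / p y0 := div_pos (hqpos y0) (hppos y0)
          have hx1 : q y0 / p y0 ≠ 1 := by
            intro h
            exact hy0 ((div_eq_one_iff_eq (hppos y0).ne').mp h).symm
          have h := Real.log_lt_sub_one_of_pos hx hx1
          calc p y0 * Real.log (q y0 / p y0) < p y0 * (q y0 / p y0 - 1) :=
                (mul_lt_mul_iff_right₀ (hppos y0)).mpr h
            _ = q y0 - p y0 := by have := (hppos y0).ne'; field_simp
    _ = 0 := sum_sub_zero p q hp hq

theorem eta_pos {Y : Type*} [Fintype Y] (μ π : Y → ℝ)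
    (hμ : IsPMF μ) (hπ : IsPMF π) (hμpos : ∀ y, 0 < μ y) (hπpos : ∀ y, 0 < π y)
    (hne : μ ≠ π) (k : ℕ) (hk : 1 ≤ k) :
    0 < sInf {x : ℝ | ∃ p : Y → ℝ, IsPMF p ∧ (∀ y, 0 < p y) ∧
      x = (k : ℝ) * KL μ p + KL π p} := by
  set m : Y → ℝ := fun y => ((k : ℝ) * μ y + π y) / ((k : ℝ) + 1) with hm
  have hk1 : (0 : ℝ) < (k : ℝ) + 1 := by positivity
  have hmpos : ∀ y, 0 < m y := fun y => by
    have : (0 : ℝ) < (k : ℝ) * μ y + π y := by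
      have := (hμpos y).le
      have := hπpos y
      positivity
    exact div_pos this hk1
  have hmpmf : IsPMF m := by
    constructor
    · exact fun y => (hmpos y).le
    · simp only [hm]
      rw [← Finset.sum_div, Finset.sum_add_distrib, ← Finset.mul_sum, hμ.2, hπ.2]
      field_simp
  have hμm : μ ≠ m := by
    obtain ⟨y0, hy0⟩ : ∃ y, μ y ≠ π y := by
      by_contra h; push_neg at h; exact hne (funext h)
    intro h
    apply hy0
    have := congrFun h y0
    simp only [hm] at this
    field_simp at this
    linarith [this]
  have h3 : ∀ y, ((k : ℝ) + 1) * m y = (k : ℝ) * μ y + π y := fun y => by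
    simp only [hm]; field_simp
  clear hm
  clear_value m
  set c : ℝ := (k : ℝ) * KL μ m + KL π m with hc
  have hcpos : 0 < c := by
    have h1 : 0 < KL μ m := KL_pos μ m hμ hmpmf hμpos hmpos hμm
    have h2 : 0 ≤ KL π m := KL_nonneg π m hπ hmpmf hπpos hmpos
    have hk' : (1 : ℝ) ≤ (k : ℝ) := by exact_mod_cast hk
    nlinarith
  -- key identity: for any full support pmf p,
  -- k KL μ p + KL π p = (k+1) KL m p + c
  have key : ∀ p : Y → ℝ, IsPMF p → (∀ y, 0 < p y) →
      (k : ℝ) * KL μ p + KL π p = ((k : ℝ) + 1) * KL m p + c := by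
    intro p hp hppos
    simp only [hc, KL, Finset.mul_sum, ← Finset.sum_add_distrib]
    refine Finset.sum_congr rfl fun y _ => ?_
    have h1 : Real.log (μ y / p y) = Real.log (μ y / m y) + Real.log (m y / p y) := by
      rw [← Real.log_mul (div_pos (hμpos y) (hmpos y)).ne' (div_pos (hmpos y) (hppos y)).ne']
      congr 1
      rw [div_mul_div_comm, mul_comm (μ y) (m y), mul_div_mul_left _ _ (hmpos y).ne']
    have h2 : Real.log (π y / p y) = Real.log (π y / m y) + Real.log (m y / p y) := by
      rw [← Real.log_mul (div_pos (hπpos y) (hmpos y)).ne' (div_pos (hmpos y) (hppos y)).ne']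
      congr 1
      rw [div_mul_div_comm, mul_comm (π y) (m y), mul_div_mul_left _ _ (hmpos y).ne']
    rw [h1, h2]
    linear_combination (-Real.log (m y / p y)) * h3 y
  apply lt_of_lt_of_le hcpos
  apply le_csInf
  · have hKLmm : KL m m = 0 := by
      unfold KL
      refine Finset.sum_eq_zero fun y _ => ?_
      rw [div_self (hmpos y).ne', Real.log_one, mul_zero]
    exact ⟨c, m, hmpmf, hmpos, by rw [key m hmpmf hmpos, hKLmm, mul_zero, zero_add]⟩
  · rintro x ⟨p, hp, hppos, rfl⟩
    rw [key p hp hppos]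
    have := KL_nonneg m p hmpmf hp hmpos hppos
    nlinarith
end

section
/- For probability distributions μ, π on a finite alphabet with full support, inf_p [D(μ‖p) + m·D(π‖p)] (infimum over full-support probability distributions p) converges to D(μ‖π) as m → ∞. In particular, the infimum is bounded above by D(μ‖π) for every m, and for every ε > 0 there exists M such that for all m ≥ M the infimum exceeds D(μ‖π) − ε. -/
open Finset
open scoped Classical

lemma KL_self {Y : Type*} [Fintype Y] (p : Y → ℝ) (hp : ∀ y, 0 < p y) : KL p p = 0 := by
  unfold KL
  apply Finset.sum_eq_zero
  intro y _
  rw [div_self (hp y).ne', Real.log_one, mul_zero]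

theorem etaBar_tendsto_KL {Y : Type*} [Fintype Y] (μ π : Y → ℝ)
    (hμ : IsPMF μ) (hπ : IsPMF π) (hμpos : ∀ y, 0 < μ y) (hπpos : ∀ y, 0 < π y) :
    (∀ m : ℕ, sInf {x : ℝ | ∃ p : Y → ℝ, IsPMF p ∧ (∀ y, 0 < p y) ∧
        x = KL μ p + (m : ℝ) * KL π p} ≤ KL μ π) ∧
    (∀ ε > (0 : ℝ), ∃ M : ℕ, ∀ m ≥ M,
      KL μ π - ε < sInf {x : ℝ | ∃ p : Y → ℝ, IsPMF p ∧ (∀ y, 0 < p y) ∧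
        x = KL μ p + (m : ℝ) * KL π p}) ∧
    Filter.Tendsto (fun m : ℕ => sInf {x : ℝ | ∃ p : Y → ℝ, IsPMF p ∧ (∀ y, 0 < p y) ∧
        x = KL μ p + (m : ℝ) * KL π p}) Filter.atTop (nhds (KL μ π)) := by
  set S : ℕ → Set ℝ := fun m => {x : ℝ | ∃ p : Y → ℝ, IsPMF p ∧ (∀ y, 0 < p y) ∧
      x = KL μ p + (m : ℝ) * KL π p} with hS
  set pbar : ℕ → Y → ℝ := fun m y => (μ y + m * π y) / (m + 1) with hpbar
  have hm1 : ∀ m : ℕ, (0:ℝ) < (m:ℝ) + 1 := by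
    intro m; positivity
  have hpbarpos : ∀ m y, 0 < pbar m y := by
    intro m y
    apply div_pos _ (hm1 m)
    have := hμpos y; have := hπpos y; positivity
  have hpbarpmf : ∀ m, IsPMF (pbar m) := by
    intro m
    constructor
    · intro y; exact (hpbarpos m y).le
    · simp only [hpbar]
      rw [← Finset.sum_div, Finset.sum_add_distrib, hμ.2, ← Finset.mul_sum, hπ.2]
      field_simp
      ring
  -- KL μ π is in every S m (take p = π)
  have hub : ∀ m, KL μ π ∈ S m := by
    intro m
    exact ⟨π, hπ, hπpos, by rw [KL_self π hπpos]; ring⟩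
  -- lower bound: every element of S m is ≥ KL μ (pbar m)
  have hlb : ∀ m, ∀ x ∈ S m, KL μ (pbar m) ≤ x := by
    intro m x hx
    obtain ⟨p, hp, hppos, rfl⟩ := hx
    have key : KL μ p + (m:ℝ) * KL π p
        = KL μ (pbar m) + (m:ℝ) * KL π (pbar m) + ((m:ℝ)+1) * KL (pbar m) p := by
      unfold KL
      rw [Finset.mul_sum, Finset.mul_sum, Finset.mul_sum, ← Finset.sum_add_distrib,
        ← Finset.sum_add_distrib, ← Finset.sum_add_distrib]
      apply Finset.sum_congr rfl
      intro y _
      have hq := hpbarpos m y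
      have hsplit : ∀ a : ℝ, 0 < a →
          Real.log (a / p y) = Real.log (a / pbar m y) + Real.log (pbar m y / p y) := by
        intro a ha
        have h1 := hq.ne'
        have h2 := (hppos y).ne'
        rw [← Real.log_mul (div_pos ha hq).ne' (div_pos hq (hppos y)).ne']
        congr 1
        field_simp
      rw [hsplit (μ y) (hμpos y), hsplit (π y) (hπpos y)]
      have hqdef : ((m:ℝ)+1) * pbar m y = μ y + m * π y := by
        simp only [hpbar]; field_simp
      generalize hg : pbar m y = q at hqdef ⊢
      linear_combination (-Real.log (q / p y)) * hqdef
    have h1 : 0 ≤ KL π (pbar m) := KL_nonneg π (pbar m) hπ (hpbarpmf m) hπpos (hpbarpos m)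
    have h2 : 0 ≤ KL (pbar m) p := KL_nonneg (pbar m) p (hpbarpmf m) hp (hpbarpos m) hppos
    have hmn : (0:ℝ) ≤ (m:ℝ) := Nat.cast_nonneg m
    nlinarith [key, mul_nonneg hmn h1,
      mul_nonneg (by linarith : (0:ℝ) ≤ (m:ℝ) + 1) h2]
  have hne : ∀ m, (S m).Nonempty := fun m => ⟨KL μ π, hub m⟩
  have hbdd : ∀ m, BddBelow (S m) := fun m => ⟨KL μ (pbar m), hlb m⟩
  have hInf_le : ∀ m, sInf (S m) ≤ KL μ π := fun m => csInf_le (hbdd m) (hub m)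
  have hle_Inf : ∀ m, KL μ (pbar m) ≤ sInf (S m) := fun m => le_csInf (hne m) (hlb m)
  -- the lower sequence tends to KL μ π
  have hc : Filter.Tendsto (fun m : ℕ => KL μ (pbar m)) Filter.atTop (nhds (KL μ π)) := by
    unfold KL
    apply tendsto_finset_sum
    intro y _
    have hpt : Filter.Tendsto (fun m : ℕ => pbar m y) Filter.atTop (nhds (π y)) := by
      have heq : ∀ m : ℕ, pbar m y = π y + (μ y - π y) / ((m:ℝ) + 1) := by
        intro m
        simp only [hpbar]
        field_simp
        ring
      simp only [heq]
      have h0 : Filter.Tendsto (fun m : ℕ => (μ y - π y) / ((m:ℝ) + 1))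
          Filter.atTop (nhds 0) := by
        apply Filter.Tendsto.div_atTop tendsto_const_nhds
        exact Filter.tendsto_atTop_add_const_right _ 1 tendsto_natCast_atTop_atTop
      simpa using tendsto_const_nhds.add h0
    have hcont : ContinuousAt (fun t : ℝ => μ y * Real.log (μ y / t)) (π y) := by
      apply ContinuousAt.mul continuousAt_const
      apply ContinuousAt.comp (Real.continuousAt_log (div_pos (hμpos y) (hπpos y)).ne')
      exact ContinuousAt.div continuousAt_const continuousAt_id (hπpos y).ne'
    exact hcont.tendsto.comp hpt
  have htend : Filter.Tendsto (fun m : ℕ => sInf (S m)) Filter.atTop (nhds (KL μ π)) :=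
    tendsto_of_tendsto_of_tendsto_of_le_of_le hc tendsto_const_nhds hle_Inf hInf_le
  refine ⟨hInf_le, ?_, htend⟩
  intro ε hε
  have hev : ∀ᶠ m : ℕ in Filter.atTop, KL μ π - ε < KL μ (pbar m) := by
    have := hc.eventually (eventually_gt_nhds (by linarith : KL μ π - ε < KL μ π))
    exact this
  obtain ⟨M, hM⟩ := Filter.eventually_atTop.mp hev
  exact ⟨M, fun m hm => lt_of_lt_of_le (hM m hm) (hle_Inf m)⟩
end

section
/- Pinsker-type separation for the outlier exponent: for probability distributions μ ≠ π on a finite alphabet with full support and k ≥ 1, η_k(μ‖π) := inf_p [k·D(μ‖p) + D(π‖p)] satisfies η_k(μ‖π) ≥ (2k/(k+1))·(d_TV(μ,π))², where d_TV is the total variation distance; in particular η_k(μ‖π) ≥ (d_TV(μ,π))². -/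
open Finset
open scoped Classical

/-! Auxiliary functions for the proof of Pinsker's inequality. -/

noncomputable def auxH (x : ℝ) : ℝ := (x + 1) * Real.log x - 2 * (x - 1)

noncomputable def auxG (x : ℝ) : ℝ :=
  2 * (x + 2) * (x * Real.log x - x + 1) - 3 * (x - 1) ^ 2

lemma log_lb {x : ℝ} (hx : 0 < x) : 1 - 1 / x ≤ Real.log x := by
  have h := Real.log_le_sub_one_of_pos (x := 1 / x) (by positivity)
  rw [Real.log_div one_ne_zero hx.ne', Real.log_one] at h
  linarith

lemma hasDerivAt_auxH {x : ℝ} (hx : x ≠ 0) :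
    HasDerivAt auxH (Real.log x + (x + 1) / x - 2) x := by
  have h1 : HasDerivAt (fun x : ℝ => (x + 1) * Real.log x)
      (1 * Real.log x + (x + 1) * x⁻¹) x :=
    ((hasDerivAt_id x).add_const 1).mul (Real.hasDerivAt_log hx)
  have h2 : HasDerivAt (fun x : ℝ => 2 * (x - 1)) (2 * 1) x :=
    ((hasDerivAt_id x).sub_const 1).const_mul 2
  have := h1.sub h2
  refine this.congr_deriv ?_
  ring

lemma auxH_mono : MonotoneOn auxH (Set.Ioi 0) := by
  have hsub : Set.Ioi (0:ℝ) ⊆ {(0:ℝ)}ᶜ := fun x hx => ne_of_gt hx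
  have hcont : ContinuousOn auxH (Set.Ioi 0) := by
    apply ContinuousOn.sub
    · exact (continuousOn_id.add continuousOn_const).mul
        (Real.continuousOn_log.mono hsub)
    · exact continuousOn_const.mul (continuousOn_id.sub continuousOn_const)
  have hint : interior (Set.Ioi (0:ℝ)) = Set.Ioi 0 := interior_Ioi
  apply monotoneOn_of_deriv_nonneg (convex_Ioi 0) hcont
  · rw [hint]
    intro x hx
    exact (hasDerivAt_auxH (ne_of_gt hx)).differentiableAt.differentiableWithinAt
  · rw [hint]
    intro x hx
    have hx' : (0:ℝ) < x := hx
    rw [(hasDerivAt_auxH hx'.ne').deriv]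
    have h := log_lb hx'
    have : (x + 1) / x = 1 + 1 / x := by field_simp
    rw [this]
    linarith

lemma auxH_one : auxH 1 = 0 := by simp [auxH]

lemma auxH_nonneg {x : ℝ} (hx : 1 ≤ x) : 0 ≤ auxH x := by
  have := auxH_mono (Set.mem_Ioi.mpr one_pos) (Set.mem_Ioi.mpr (lt_of_lt_of_le one_pos hx)) hx
  rwa [auxH_one] at this

lemma auxH_nonpos {x : ℝ} (hx0 : 0 < x) (hx : x ≤ 1) : auxH x ≤ 0 := by
  have := auxH_mono (Set.mem_Ioi.mpr hx0) (Set.mem_Ioi.mpr one_pos) hx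
  rwa [auxH_one] at this

lemma hasDerivAt_auxG {x : ℝ} (hx : x ≠ 0) : HasDerivAt auxG (4 * auxH x) x := by
  have hA : HasDerivAt (fun x : ℝ => x * Real.log x - x + 1)
      ((Real.log x + 1) - 1) x :=
    ((Real.hasDerivAt_mul_log hx).sub (hasDerivAt_id x)).add_const 1
  have hB : HasDerivAt (fun x : ℝ => 2 * (x + 2)) (2 * 1) x :=
    ((hasDerivAt_id x).add_const 2).const_mul 2
  have hC := hB.mul hA
  have hD : HasDerivAt (fun x : ℝ => 3 * (x - 1) ^ 2)
      (3 * (2 * (x - 1) ^ 1 * 1)) x :=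
    (((hasDerivAt_id x).sub_const 1).pow 2).const_mul 3
  have := hC.sub hD
  refine this.congr_deriv ?_
  simp only [auxH]
  ring

lemma auxG_one : auxG 1 = 0 := by simp [auxG]

lemma auxG_contOn {s : Set ℝ} (hs : s ⊆ {(0:ℝ)}ᶜ) : ContinuousOn auxG s := by
  apply ContinuousOn.sub
  · exact (continuousOn_const.mul (continuousOn_id.add continuousOn_const)).mul
      (((continuousOn_id.mul (Real.continuousOn_log.mono hs)).sub continuousOn_id).add
        continuousOn_const)
  · exact continuousOn_const.mul ((continuousOn_id.sub continuousOn_const).pow 2)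

lemma auxG_nonneg {x : ℝ} (hx : 0 < x) : 0 ≤ auxG x := by
  rcases le_total 1 x with h1 | h1
  · have hmono : MonotoneOn auxG (Set.Ici 1) := by
      apply monotoneOn_of_deriv_nonneg (convex_Ici 1)
        (auxG_contOn (fun y hy => by
          have : (1:ℝ) ≤ y := hy
          exact ne_of_gt (lt_of_lt_of_le one_pos this)))
      · rw [interior_Ici]
        intro y hy
        have hy' : (0:ℝ) < y := lt_trans one_pos hy
        exact (hasDerivAt_auxG hy'.ne').differentiableAt.differentiableWithinAt
      · rw [interior_Ici]
        intro y hy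
        have hy1 : (1:ℝ) ≤ y := le_of_lt hy
        rw [(hasDerivAt_auxG (ne_of_gt (lt_trans one_pos hy))).deriv]
        have := auxH_nonneg hy1
        linarith
    have := hmono (Set.mem_Ici.mpr le_rfl) (Set.mem_Ici.mpr h1) h1
    rwa [auxG_one] at this
  · have hanti : AntitoneOn auxG (Set.Ioc 0 1) := by
      apply antitoneOn_of_deriv_nonpos (convex_Ioc 0 1)
        (auxG_contOn (fun y hy => ne_of_gt hy.1))
      · rw [interior_Ioc]
        intro y hy
        exact (hasDerivAt_auxG (ne_of_gt hy.1)).differentiableAt.differentiableWithinAt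
      · rw [interior_Ioc]
        intro y hy
        rw [(hasDerivAt_auxG (ne_of_gt hy.1)).deriv]
        have := auxH_nonpos hy.1 (le_of_lt hy.2)
        linarith
    have := hanti (Set.mem_Ioc.mpr ⟨hx, h1⟩) (Set.mem_Ioc.mpr ⟨one_pos, le_rfl⟩) h1
    rwa [auxG_one] at this

/-- Key pointwise inequality: `3(a-b)² ≤ 2(a+2b)(a log(a/b) - a + b)` for `a, b > 0`. -/
lemma key_pointwise {a b : ℝ} (ha : 0 < a) (hb : 0 < b) :
    3 * (a - b) ^ 2 ≤ 2 * (a + 2 * b) * (a * Real.log (a / b) - a + b) := by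
  set u := a / b with hu
  have hu0 : 0 < u := div_pos ha hb
  have hG := auxG_nonneg hu0
  have hG' : 3 * (u - 1) ^ 2 ≤ 2 * (u + 2) * (u * Real.log u - u + 1) := by
    simp only [auxG] at hG; linarith
  have ha' : a = u * b := by rw [hu, div_mul_cancel₀ a hb.ne']
  have h3 : 3 * (a - b) ^ 2 = b ^ 2 * (3 * (u - 1) ^ 2) := by rw [ha']; ring
  have h4 : 2 * (a + 2 * b) * (a * Real.log (a / b) - a + b) =
      b ^ 2 * (2 * (u + 2) * (u * Real.log u - u + 1)) := by
    rw [← hu, ha']; ring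
  rw [h3, h4]
  exact mul_le_mul_of_nonneg_left hG' (sq_nonneg b)

lemma pointwise_bound {a b : ℝ} (ha : 0 ≤ a) (hb : 0 < b) :
    3 * (a - b) ^ 2 / (2 * (a + 2 * b)) ≤ a * Real.log (a / b) - a + b := by
  have hpos : 0 < 2 * (a + 2 * b) := by positivity
  rw [div_le_iff₀ hpos]
  rcases ha.eq_or_lt with h | h
  · rw [← h]
    nlinarith [hb]
  · have := key_pointwise h hb
    nlinarith [this]

/-- Pinsker's inequality for finite PMFs. -/
lemma pinsker_finite {Y : Type*} [Fintype Y] (p q : Y → ℝ)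
    (hp : IsPMF p) (hq : IsPMF q) (hqpos : ∀ y, 0 < q y) :
    2 * ((1 / 2) * ∑ y, |p y - q y|) ^ 2 ≤ KL p q := by
  classical
  have hKL : KL p q = ∑ y, (p y * Real.log (p y / q y) - p y + q y) := by
    rw [KL, Finset.sum_add_distrib, Finset.sum_sub_distrib, hp.2, hq.2]
    ring
  have hterm : ∀ y, 3 * (p y - q y) ^ 2 / (2 * (p y + 2 * q y)) ≤
      p y * Real.log (p y / q y) - p y + q y :=
    fun y => pointwise_bound (hp.1 y) (hqpos y)
  have hsum1 : ∑ y, 3 * (p y - q y) ^ 2 / (2 * (p y + 2 * q y)) ≤ KL p q := by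
    rw [hKL]
    exact Finset.sum_le_sum (fun y _ => hterm y)
  -- Cauchy-Schwarz
  have hcs := Finset.sum_mul_sq_le_sq_mul_sq Finset.univ
    (fun y => |p y - q y| / Real.sqrt (p y + 2 * q y))
    (fun y => Real.sqrt (p y + 2 * q y))
  have hspos : ∀ y : Y, 0 < p y + 2 * q y := fun y => by
    have := hp.1 y; have := hqpos y; linarith
  have he1 : ∀ y : Y, |p y - q y| / Real.sqrt (p y + 2 * q y) *
      Real.sqrt (p y + 2 * q y) = |p y - q y| := fun y =>
    div_mul_cancel₀ _ (Real.sqrt_ne_zero'.mpr (hspos y))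
  have he2 : ∀ y : Y, (|p y - q y| / Real.sqrt (p y + 2 * q y)) ^ 2 =
      (p y - q y) ^ 2 / (p y + 2 * q y) := fun y => by
    rw [div_pow, sq_abs, Real.sq_sqrt (hspos y).le]
  have he3 : ∀ y : Y, (Real.sqrt (p y + 2 * q y)) ^ 2 = p y + 2 * q y := fun y =>
    Real.sq_sqrt (hspos y).le
  simp only [he1, he2, he3] at hcs
  have he4 : ∑ y : Y, (p y + 2 * q y) = 3 := by
    rw [Finset.sum_add_distrib, hp.2, ← Finset.mul_sum, hq.2]
    norm_num
  rw [he4] at hcs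
  -- hcs : (∑ |p - q|)^2 ≤ (∑ (p-q)^2/(p+2q)) * 3
  have he5 : ∑ y, 3 * (p y - q y) ^ 2 / (2 * (p y + 2 * q y)) =
      (3 / 2) * ∑ y, (p y - q y) ^ 2 / (p y + 2 * q y) := by
    rw [Finset.mul_sum]
    apply Finset.sum_congr rfl
    intro y _
    field_simp
  rw [he5] at hsum1
  nlinarith [hcs, hsum1]

theorem eta_pinsker_separation {Y : Type*} [Fintype Y] (μ π : Y → ℝ)
    (hμ : IsPMF μ) (hπ : IsPMF π) (hμpos : ∀ y, 0 < μ y) (hπpos : ∀ y, 0 < π y)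
    (hne : μ ≠ π) (k : ℕ) (hk : 1 ≤ k) :
    (2 * (k : ℝ) / ((k : ℝ) + 1)) * ((1 / 2) * ∑ y, |μ y - π y|) ^ 2 ≤
        sInf {x : ℝ | ∃ p : Y → ℝ, IsPMF p ∧ (∀ y, 0 < p y) ∧
          x = (k : ℝ) * KL μ p + KL π p} ∧
    ((1 / 2) * ∑ y, |μ y - π y|) ^ 2 ≤
        sInf {x : ℝ | ∃ p : Y → ℝ, IsPMF p ∧ (∀ y, 0 < p y) ∧
          x = (k : ℝ) * KL μ p + KL π p} := by
  classical
  set t : ℝ := (1 / 2) * ∑ y, |μ y - π y| with ht_def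
  have ht : 0 ≤ t := by positivity
  have hk1 : (1 : ℝ) ≤ (k : ℝ) := by exact_mod_cast hk
  have hkpos : (0 : ℝ) < (k : ℝ) + 1 := by linarith
  have hne' : Set.Nonempty {x : ℝ | ∃ p : Y → ℝ, IsPMF p ∧ (∀ y, 0 < p y) ∧
      x = (k : ℝ) * KL μ p + KL π p} :=
    ⟨(k : ℝ) * KL μ μ + KL π μ, μ, hμ, hμpos, rfl⟩
  have hlow : ∀ x ∈ {x : ℝ | ∃ p : Y → ℝ, IsPMF p ∧ (∀ y, 0 < p y) ∧
      x = (k : ℝ) * KL μ p + KL π p},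
      (2 * (k : ℝ) / ((k : ℝ) + 1)) * t ^ 2 ≤ x := by
    rintro x ⟨p, hp, hppos, rfl⟩
    set a : ℝ := (1 / 2) * ∑ y, |μ y - p y| with ha_def
    set b : ℝ := (1 / 2) * ∑ y, |π y - p y| with hb_def
    have ha : 0 ≤ a := by positivity
    have hb : 0 ≤ b := by positivity
    have h1 : 2 * a ^ 2 ≤ KL μ p := pinsker_finite μ p hμ hp hppos
    have h2 : 2 * b ^ 2 ≤ KL π p := pinsker_finite π p hπ hp hppos
    have htri : t ≤ a + b := by
      have hy : ∀ y : Y, |μ y - π y| ≤ |μ y - p y| + |π y - p y| := fun y => by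
        have h := abs_sub_le (μ y) (p y) (π y)
        rwa [abs_sub_comm (p y) (π y)] at h
      have hs : ∑ y, |μ y - π y| ≤ ∑ y, |μ y - p y| + ∑ y, |π y - p y| := by
        rw [← Finset.sum_add_distrib]
        exact Finset.sum_le_sum (fun y _ => hy y)
      rw [ht_def, ha_def, hb_def]
      linarith
    have ht2 : t ^ 2 ≤ (a + b) ^ 2 := by nlinarith
    rw [div_mul_eq_mul_div, div_le_iff₀ hkpos]
    have hknn : (0 : ℝ) ≤ (k : ℝ) := by linarith
    nlinarith [sq_nonneg ((k : ℝ) * a - b), mul_le_mul_of_nonneg_left h1 hknn,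
      h2, ht2, mul_le_mul_of_nonneg_left ht2 hknn]
  have hfirst := le_csInf hne' hlow
  refine ⟨hfirst, le_trans ?_ hfirst⟩
  rw [div_mul_eq_mul_div, le_div_iff₀ hkpos]
  nlinarith [sq_nonneg t]
end

section
/- Monotone limit of the distinct-outlier exponent: for probability distributions μ ≠ π on a finite alphabet with full support, the sequence m ↦ inf_p [D(μ‖p) + m·D(π‖p)] is nondecreasing, bounded above by D(μ‖π), and its supremum over m ∈ ℕ equals D(μ‖π). -/
open Finset
open scoped Classical

section Aux
variable {Y : Type*} [Fintype Y]

lemma one_sub_inv_le_log (x : ℝ) (hx : 0 < x) : 1 - 1/x ≤ Real.log x := by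
  have h := Real.log_le_sub_one_of_pos (show (0:ℝ) < 1/x by positivity)
  rw [Real.log_div one_ne_zero (ne_of_gt hx), Real.log_one] at h
  linarith

lemma kl_nonneg (q p : Y → ℝ) (hq : IsPMF q) (hp : IsPMF p)
    (hqpos : ∀ y, 0 < q y) (hppos : ∀ y, 0 < p y) : 0 ≤ KL q p := by
  have h : ∀ y, q y - p y ≤ q y * Real.log (q y / p y) := by
    intro y
    have hqy := hqpos y
    have hpy := hppos y
    have h1 : 1 - 1/(q y / p y) ≤ Real.log (q y / p y) :=
      one_sub_inv_le_log _ (div_pos hqy hpy)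
    have h2 : (1:ℝ)/(q y / p y) = p y / q y := by
      rw [one_div, inv_div]
    rw [h2] at h1
    have h4 := mul_le_mul_of_nonneg_left h1 hqy.le
    have h3 : q y * (1 - p y / q y) = q y - p y := by
      field_simp
    linarith [h3 ▸ h4]
  have hsum := Finset.sum_le_sum (fun y (_ : y ∈ Finset.univ) => h y)
  rw [Finset.sum_sub_distrib, hq.2, hp.2] at hsum
  unfold KL
  linarith

lemma kl_self (p : Y → ℝ) (hppos : ∀ y, 0 < p y) : KL p p = 0 := by
  unfold KL
  apply Finset.sum_eq_zero
  intro y _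
  rw [div_self (hppos y).ne', Real.log_one, mul_zero]

/-- Hellinger-type lower bound for KL. -/
lemma hellinger_le_kl (π p : Y → ℝ) (hπ : IsPMF π) (hp : IsPMF p)
    (hπpos : ∀ y, 0 < π y) (hppos : ∀ y, 0 < p y) :
    ∑ y, (Real.sqrt (p y) - Real.sqrt (π y))^2 ≤ KL π p := by
  have key : ∀ y, 2 * π y - 2 * Real.sqrt (π y * p y)
      ≤ π y * Real.log (π y / p y) := by
    intro y
    have hπy := hπpos y
    have hpy := hppos y
    have hx : 0 < Real.sqrt (π y / p y) := Real.sqrt_pos.2 (by positivity)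
    have h1 := one_sub_inv_le_log _ hx
    have hinv : 1 / Real.sqrt (π y / p y) = Real.sqrt (p y / π y) := by
      rw [one_div, ← Real.sqrt_inv]
      congr 1
      field_simp
    rw [hinv] at h1
    have hms : π y * Real.sqrt (p y / π y) = Real.sqrt (π y * p y) := by
      rw [show π y * p y = π y^2 * (p y / π y) by field_simp,
        Real.sqrt_mul (by positivity), Real.sqrt_sq hπy.le]
    have hlog : Real.log (π y / p y) = 2 * Real.log (Real.sqrt (π y / p y)) := by
      rw [Real.log_sqrt (by positivity)]
      ring
    have h2 := mul_le_mul_of_nonneg_left h1 (show (0:ℝ) ≤ 2 * π y by positivity)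
    rw [hlog]
    nlinarith [hms]
  have per : ∀ y, (Real.sqrt (p y) - Real.sqrt (π y))^2
      = (2 * π y - 2 * Real.sqrt (π y * p y)) + (p y - π y) := by
    intro y
    have hm : Real.sqrt (π y) * Real.sqrt (p y) = Real.sqrt (π y * p y) :=
      (Real.sqrt_mul (hπpos y).le _).symm
    rw [sub_sq, Real.sq_sqrt (hppos y).le, Real.sq_sqrt (hπpos y).le]
    linear_combination (-2 : ℝ) * hm
  calc ∑ y, (Real.sqrt (p y) - Real.sqrt (π y))^2
      = ∑ y, ((2 * π y - 2 * Real.sqrt (π y * p y)) + (p y - π y)) :=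
        Finset.sum_congr rfl (fun y _ => per y)
    _ = (∑ y, (2 * π y - 2 * Real.sqrt (π y * p y))) + ((∑ y, p y) - ∑ y, π y) := by
        simp only [Finset.sum_add_distrib, Finset.sum_sub_distrib]
    _ = ∑ y, (2 * π y - 2 * Real.sqrt (π y * p y)) := by
        rw [hp.2, hπ.2]; ring
    _ ≤ ∑ y, π y * Real.log (π y / p y) := Finset.sum_le_sum (fun y _ => key y)
    _ = KL π p := rfl

/-- Elementary Pinsker-type bound: total variation vs KL. -/
lemma tv_le_sqrt_kl (π p : Y → ℝ) (hπ : IsPMF π) (hp : IsPMF p)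
    (hπpos : ∀ y, 0 < π y) (hppos : ∀ y, 0 < p y) :
    ∑ y, |p y - π y| ≤ 2 * Real.sqrt (KL π p) := by
  have habs : ∀ y, |p y - π y|
      = |Real.sqrt (p y) - Real.sqrt (π y)| * (Real.sqrt (p y) + Real.sqrt (π y)) := by
    intro y
    rw [← abs_of_nonneg (show (0:ℝ) ≤ Real.sqrt (p y) + Real.sqrt (π y) by positivity),
      ← abs_mul]
    congr 1
    have h1 := Real.sq_sqrt (hppos y).le
    have h2 := Real.sq_sqrt (hπpos y).le
    linear_combination h2 - h1
  have hcs := Finset.sum_mul_sq_le_sq_mul_sq Finset.univ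
    (fun y => |Real.sqrt (p y) - Real.sqrt (π y)|)
    (fun y => Real.sqrt (p y) + Real.sqrt (π y))
  have hA : ∑ y, |Real.sqrt (p y) - Real.sqrt (π y)|^2 ≤ KL π p := by
    have := hellinger_le_kl π p hπ hp hπpos hppos
    simpa [sq_abs] using this
  have hB : ∑ y, (Real.sqrt (p y) + Real.sqrt (π y))^2 ≤ 4 := by
    have h : ∀ y, (Real.sqrt (p y) + Real.sqrt (π y))^2 ≤ 2 * (p y + π y) := by
      intro y
      have h1 := Real.sq_sqrt (hppos y).le
      have h2 := Real.sq_sqrt (hπpos y).le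
      nlinarith [sq_nonneg (Real.sqrt (p y) - Real.sqrt (π y))]
    calc ∑ y, (Real.sqrt (p y) + Real.sqrt (π y))^2
        ≤ ∑ y, 2 * (p y + π y) := Finset.sum_le_sum (fun y _ => h y)
      _ = 4 := by
          rw [← Finset.mul_sum, Finset.sum_add_distrib, hp.2, hπ.2]; norm_num
  have hkl0 : 0 ≤ KL π p := kl_nonneg π p hπ hp hπpos hppos
  have hsq : (∑ y, |p y - π y|)^2 ≤ 4 * KL π p := by
    rw [show (∑ y, |p y - π y|) = ∑ y, |Real.sqrt (p y) - Real.sqrt (π y)|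
        * (Real.sqrt (p y) + Real.sqrt (π y)) from Finset.sum_congr rfl (fun y _ => habs y)]
    calc (∑ y, |Real.sqrt (p y) - Real.sqrt (π y)| * (Real.sqrt (p y) + Real.sqrt (π y)))^2
        ≤ (∑ y, |Real.sqrt (p y) - Real.sqrt (π y)|^2)
          * ∑ y, (Real.sqrt (p y) + Real.sqrt (π y))^2 := hcs
      _ ≤ KL π p * 4 := by
          apply mul_le_mul hA hB (Finset.sum_nonneg (fun y _ => sq_nonneg _)) hkl0
      _ = 4 * KL π p := by ring
  have hs0 : 0 ≤ ∑ y, |p y - π y| := Finset.sum_nonneg (fun y _ => abs_nonneg _)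
  have hsqrt := Real.sq_sqrt hkl0
  nlinarith [Real.sqrt_nonneg (KL π p)]

/-- Main quantitative lower bound. -/
lemma main_lb (μ π p : Y → ℝ) (hμ : IsPMF μ) (hπ : IsPMF π) (hp : IsPMF p)
    (hμpos : ∀ y, 0 < μ y) (hπpos : ∀ y, 0 < π y) (hppos : ∀ y, 0 < p y)
    (r : ℝ) (hr0 : 0 < r) (hr : ∀ y, μ y ≤ r * π y) (m : ℕ) (hm : 1 ≤ m) :
    KL μ π - r^2 / m ≤ KL μ p + (m : ℝ) * KL π p := by
  have hmpos : (0:ℝ) < m := by exact_mod_cast hm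
  -- Step 1: KL μ π - KL μ p ≤ r * TV
  have step1 : KL μ π - KL μ p ≤ r * ∑ y, |p y - π y| := by
    have hdiff : KL μ π - KL μ p = ∑ y, μ y * Real.log (p y / π y) := by
      unfold KL
      rw [← Finset.sum_sub_distrib]
      apply Finset.sum_congr rfl
      intro y _
      rw [Real.log_div (hμpos y).ne' (hπpos y).ne',
        Real.log_div (hμpos y).ne' (hppos y).ne',
        Real.log_div (hppos y).ne' (hπpos y).ne']
      ring
    rw [hdiff, Finset.mul_sum]
    apply Finset.sum_le_sum
    intro y _
    rcases le_or_gt (Real.log (p y / π y)) 0 with hl | hl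
    · have h1 : μ y * Real.log (p y / π y) ≤ 0 :=
        mul_nonpos_of_nonneg_of_nonpos (hμpos y).le hl
      have h2 : 0 ≤ r * |p y - π y| := by positivity
      linarith
    · have hπy := hπpos y
      have hpy := hppos y
      have hlog := Real.log_le_sub_one_of_pos (div_pos hpy hπy)
      have h1 : μ y * Real.log (p y / π y) ≤ (r * π y) * Real.log (p y / π y) :=
        mul_le_mul_of_nonneg_right (hr y) hl.le
      have h2 : (r * π y) * Real.log (p y / π y) ≤ (r * π y) * (p y / π y - 1) :=
        mul_le_mul_of_nonneg_left hlog (by positivity)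
      have h3 : (r * π y) * (p y / π y - 1) = r * (p y - π y) := by
        field_simp
      have h4 : r * (p y - π y) ≤ r * |p y - π y| :=
        mul_le_mul_of_nonneg_left (le_abs_self _) hr0.le
      linarith
  -- Step 2: TV ≤ 2 √(KL π p)
  have step2 := tv_le_sqrt_kl π p hπ hp hπpos hppos
  set t := KL π p with ht
  set s := Real.sqrt t with hs
  have ht0 : 0 ≤ t := kl_nonneg π p hπ hp hπpos hppos
  have hs0 : 0 ≤ s := Real.sqrt_nonneg t
  have hts : t = s^2 := (Real.sq_sqrt ht0).symm
  have step3 : r * ∑ y, |p y - π y| ≤ r * (2 * s) :=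
    mul_le_mul_of_nonneg_left step2 hr0.le
  -- Step 4: m t - 2 r s ≥ - r^2 / m
  have key : -(r^2 / m) ≤ (m:ℝ) * t - 2 * r * s := by
    have hsq := sq_nonneg ((m:ℝ) * s - r)
    have heq : (m:ℝ) * ((m:ℝ) * t - 2 * r * s + r^2 / m)
        = ((m:ℝ) * s - r)^2 := by
      rw [hts]
      field_simp
      ring
    nlinarith
  linarith

end Aux

theorem etaBar_monotone_sup {Y : Type*} [Fintype Y] (μ π : Y → ℝ)
    (hμ : IsPMF μ) (hπ : IsPMF π) (hμpos : ∀ y, 0 < μ y) (hπpos : ∀ y, 0 < π y)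
    (hne : μ ≠ π) :
    Monotone (fun m : ℕ => sInf {x : ℝ | ∃ p : Y → ℝ, IsPMF p ∧ (∀ y, 0 < p y) ∧
        x = KL μ p + (m : ℝ) * KL π p}) ∧
    (∀ m : ℕ, sInf {x : ℝ | ∃ p : Y → ℝ, IsPMF p ∧ (∀ y, 0 < p y) ∧
        x = KL μ p + (m : ℝ) * KL π p} ≤ KL μ π) ∧
    (⨆ m : ℕ, sInf {x : ℝ | ∃ p : Y → ℝ, IsPMF p ∧ (∀ y, 0 < p y) ∧
        x = KL μ p + (m : ℝ) * KL π p}) = KL μ π := by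
  set S : ℕ → Set ℝ := fun m => {x : ℝ | ∃ p : Y → ℝ, IsPMF p ∧ (∀ y, 0 < p y) ∧
      x = KL μ p + (m : ℝ) * KL π p} with hS
  have hmem : ∀ m : ℕ, KL μ π ∈ S m := by
    intro m
    exact ⟨π, hπ, hπpos, by rw [kl_self π hπpos]; ring⟩
  have hnonempty : ∀ m : ℕ, (S m).Nonempty := fun m => ⟨KL μ π, hmem m⟩
  have hbdd : ∀ m : ℕ, BddBelow (S m) := by
    intro m
    refine ⟨0, ?_⟩
    rintro x ⟨p, hp, hppos, rfl⟩
    have h1 := kl_nonneg μ p hμ hp hμpos hppos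
    have h2 := kl_nonneg π p hπ hp hπpos hppos
    have hm0 : (0:ℝ) ≤ m := Nat.cast_nonneg m
    nlinarith
  have hub : ∀ m : ℕ, sInf (S m) ≤ KL μ π := fun m => csInf_le (hbdd m) (hmem m)
  have hmono : Monotone (fun m : ℕ => sInf (S m)) := by
    intro a b hab
    apply le_csInf (hnonempty b)
    rintro x ⟨p, hp, hppos, rfl⟩
    have hel : KL μ p + (a : ℝ) * KL π p ∈ S a := ⟨p, hp, hppos, rfl⟩
    have h2 := kl_nonneg π p hπ hp hπpos hppos
    calc sInf (S a) ≤ KL μ p + (a : ℝ) * KL π p := csInf_le (hbdd a) hel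
      _ ≤ KL μ p + (b : ℝ) * KL π p := by
          have : (a:ℝ) ≤ b := by exact_mod_cast hab
          nlinarith
  refine ⟨hmono, hub, ?_⟩
  -- the supremum
  obtain ⟨r, hr0, hr⟩ : ∃ r : ℝ, 0 < r ∧ ∀ y, μ y ≤ r * π y := by
    have hsum0 : 0 ≤ ∑ z, μ z / π z :=
      Finset.sum_nonneg (fun z _ => div_nonneg (hμpos z).le (hπpos z).le)
    refine ⟨1 + ∑ y, μ y / π y, by linarith, ?_⟩
    intro y
    have h1 : μ y / π y ≤ ∑ z, μ z / π z :=
      Finset.single_le_sum (f := fun z => μ z / π z)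
        (fun z _ => div_nonneg (hμpos z).le (hπpos z).le) (Finset.mem_univ y)
    have h2 : μ y / π y ≤ 1 + ∑ z, μ z / π z := by
      have : (0:ℝ) ≤ 1 := zero_le_one
      linarith
    calc μ y = (μ y / π y) * π y := by
          rw [div_mul_cancel₀ _ (hπpos y).ne']
      _ ≤ (1 + ∑ z, μ z / π z) * π y :=
          mul_le_mul_of_nonneg_right h2 (hπpos y).le
  have hlb : ∀ m : ℕ, 1 ≤ m → KL μ π - r^2 / m ≤ sInf (S m) := by
    intro m hm
    apply le_csInf (hnonempty m)
    rintro x ⟨p, hp, hppos, rfl⟩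
    exact main_lb μ π p hμ hπ hp hμpos hπpos hppos r hr0 hr m hm
  have hbddA : BddAbove (Set.range fun m : ℕ => sInf (S m)) := by
    refine ⟨KL μ π, ?_⟩
    rintro x ⟨m, rfl⟩
    exact hub m
  apply le_antisymm (ciSup_le hub)
  have h0 : Filter.Tendsto (fun n : ℕ => r^2 / ((n:ℝ) + 1)) Filter.atTop (nhds 0) := by
    have := tendsto_one_div_add_atTop_nhds_zero_nat.const_mul (r^2)
    simpa [mul_one_div, div_eq_mul_inv] using this
  have htend : Filter.Tendsto (fun n : ℕ => KL μ π - r^2 / ((n:ℝ) + 1))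
      Filter.atTop (nhds (KL μ π)) := by
    have := Filter.Tendsto.sub (tendsto_const_nhds (x := KL μ π)
      (f := Filter.atTop (α := ℕ))) h0
    simpa using this
  apply le_of_tendsto' htend
  intro n
  have h1 : KL μ π - r^2 / ((n:ℝ) + 1) ≤ sInf (S (n + 1)) := by
    have := hlb (n + 1) (Nat.le_add_left 1 n)
    push_cast at this
    convert this using 3 <;> push_cast <;> ring
  calc KL μ π - r^2 / ((n:ℝ) + 1) ≤ sInf (S (n + 1)) := h1
    _ ≤ ⨆ m : ℕ, sInf (S m) := le_ciSup hbddA (n + 1)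
end
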